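/- Let x ∈ ℝⁿ and let X be a real symmetric n×n matrix with diag(X) = |x| (that is, X_ii = |x_i| for all i). Let Y be the (n+1)×(n+1) bordered matrix with Y_00 = 1, first row and column equal to xᵀ and x, and lower-right block X. Then Y has all entries in {0, −1, 1} and is positive semidefinite if and only if X = x xᵀ. -/

import Mathlib

open Matrix

theorem stmt_2 (n : ℕ) (x : Fin n → ℝ) (X : Matrix (Fin n) (Fin n) ℝ)
    (hsymm : X.IsSymm) (hdiag : ∀ i, X i i = |x i|)
    (Y : Matrix (Fin 1 ⊕ Fin n) (Fin 1 ⊕ Fin n) ℝ)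
    (hY : Y = Matrix.fromBlocks (Matrix.of fun _ _ => (1 : ℝ))
      (Matrix.of fun _ j => x j) (Matrix.of fun i _ => x i) X) :
    ((∀ i j, Y i j = 0 ∨ Y i j = -1 ∨ Y i j = 1) ∧ Y.PosSemidef) ↔
      X = vecMulVec x x := by
  subst hY
  constructor
  · rintro ⟨hter, hpsd⟩
    have hx : ∀ i, x i = 0 ∨ x i = -1 ∨ x i = 1 := fun i => by
      simpa using hter (Sum.inl 0) (Sum.inr i)
    have hsq : ∀ i, x i * x i = |x i| := fun i => by
      rcases hx i with h | h | h <;> rw [h] <;> norm_num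
    ext i j
    rw [vecMulVec_apply]
    have hsym' : X j i = X i j := by
      have := hsymm
      rw [Matrix.IsSymm] at this
      calc X j i = Xᵀ i j := rfl
        _ = X i j := by rw [this]
    have quad : ∀ s : ℝ, s * s = 1 →
        0 ≤ 2 * s * (X i j - x i * x j) := by
      intro s hs
      have h := hpsd.dotProduct_mulVec_nonneg (Sum.elim (fun _ => -(x i + s * x j))
        (fun k => (if k = i then 1 else 0) + s * (if k = j then 1 else 0)))
      rw [star_trivial, fromBlocks_mulVec, sumElim_dotProduct_sumElim] at h
      simp only [Matrix.mulVec, dotProduct, Pi.add_apply, Function.comp_apply, Sum.elim_inl, Sum.elim_inr,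
        Fin.sum_univ_one, Matrix.of_apply, mul_ite, ite_mul, mul_add, add_mul,
        mul_zero, zero_mul, mul_one, one_mul, Finset.sum_add_distrib,
        Finset.sum_ite_eq, Finset.sum_ite_eq', Finset.mem_univ, if_true] at h
      have e : -(x i + s * x j) * -(x i + s * x j) +
          (-(x i + s * x j) * x i + -(x i + s * x j) * (x j * s)) +
          (x i * -(x i + s * x j) + s * (x j * -(x i + s * x j)) +
            (X i i + s * X j i + (X i j * s + s * (X j j * s)))) =
          2 * s * (X i j - x i * x j) + (X i i - x i * x i) +
            s * s * (X j j - x j * x j) + s * (X j i - X i j) := by ring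
      rw [e, hs, hsym', sub_self, mul_zero, add_zero] at h
      have hii := hdiag i
      have hjj := hdiag j
      have h1 := hsq i
      have h2 := hsq j
      linarith
    have h1 := quad 1 (by norm_num)
    have h2 := quad (-1) (by norm_num)
    linarith
  · intro hX
    subst hX
    have hx : ∀ i, x i = 0 ∨ x i = -1 ∨ x i = 1 := by
      intro i
      have h := hdiag i
      rw [vecMulVec_apply] at h
      have h0 : x i * (x i - 1) * (x i + 1) = 0 := by
        rcases abs_cases (x i) with ⟨h1, _⟩ | ⟨h1, _⟩ <;> nlinarith
      rcases mul_eq_zero.1 h0 with h' | h'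
      · rcases mul_eq_zero.1 h' with h'' | h''
        · exact Or.inl h''
        · exact Or.inr (Or.inr (by linarith))
      · exact Or.inr (Or.inl (by linarith))
    constructor
    · rintro (i | i) (j | j)
      · simp
      · simpa using hx j
      · simpa using hx i
      · simp only [fromBlocks_apply₂₂, vecMulVec_apply]
        rcases hx i with h | h | h <;> rcases hx j with h' | h' | h' <;>
          rw [h, h'] <;> norm_num
    · set v : Fin 1 ⊕ Fin n → ℝ := Sum.elim (fun _ => 1) x with hvdef
      have hv : (Matrix.fromBlocks (Matrix.of fun _ _ => (1 : ℝ))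
          (Matrix.of fun _ j => x j) (Matrix.of fun i _ => x i) (vecMulVec x x)) =
          vecMulVec v v := by
        ext (i | i) (j | j) <;> simp [hvdef, vecMulVec_apply]
      rw [hv]
      refine posSemidef_iff_dotProduct_mulVec.mpr ⟨?_, ?_⟩
      · ext i j
        simp [vecMulVec_apply, mul_comm]
      · intro w
        have hmv : vecMulVec v v *ᵥ w = fun k => (v ⬝ᵥ w) * v k := by
          funext k
          simp only [Matrix.mulVec, dotProduct, vecMulVec_apply, Finset.sum_mul]
          exact Finset.sum_congr rfl fun l _ => by ring
        rw [star_trivial, hmv]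
        have he : (w ⬝ᵥ fun k => (v ⬝ᵥ w) * v k) = (v ⬝ᵥ w) * (v ⬝ᵥ w) := by
          simp only [dotProduct, Finset.mul_sum]
          exact Finset.sum_congr rfl fun l _ => by ring
        rw [he]
        exact mul_self_nonneg _
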